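/- The function l(x, β) = x^{n+1}/(c + μβ)^n + b·x is convex on the domain {(x, β) : x ≥ 0, β ≥ 0}, where c > 0, μ ≥ 0, b ≥ 0, and n ≥ 1 is a natural number. -/

import Mathlib

lemma radon_key (n : ℕ) (x1 x2 y1 y2 a b : ℝ) (hx1 : 0 ≤ x1) (hx2 : 0 ≤ x2)
    (hy1 : 0 < y1) (hy2 : 0 < y2) (ha : 0 ≤ a) (hb : 0 ≤ b) (hab : a + b = 1) :
    (a * x1 + b * x2) ^ (n + 1) / (a * y1 + b * y2) ^ n ≤
      a * (x1 ^ (n + 1) / y1 ^ n) + b * (x2 ^ (n + 1) / y2 ^ n) := by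
  set Y := a * y1 + b * y2 with hY
  have hYpos : 0 < Y := by
    rcases eq_or_lt_of_le ha with h | h
    · have hb1 : b = 1 := by linarith
      simp [hY, ← h, hb1, hy2]
    · have h1 : 0 < a * y1 := mul_pos h hy1
      have h2 : 0 ≤ b * y2 := mul_nonneg hb hy2.le
      linarith
  have hconv := (convexOn_pow (n + 1)).2
    (Set.mem_Ici.mpr (div_nonneg hx1 hy1.le))
    (Set.mem_Ici.mpr (div_nonneg hx2 hy2.le))
    (mul_nonneg (mul_nonneg ha hy1.le) (inv_nonneg.mpr hYpos.le))
    (mul_nonneg (mul_nonneg hb hy2.le) (inv_nonneg.mpr hYpos.le))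
    (show a * y1 * Y⁻¹ + b * y2 * Y⁻¹ = 1 by
      field_simp; exact hY.symm)
  simp only [smul_eq_mul] at hconv
  have h1 : a * y1 * Y⁻¹ * (x1 / y1) + b * y2 * Y⁻¹ * (x2 / y2)
      = (a * x1 + b * x2) / Y := by
    field_simp
  rw [h1] at hconv
  have hmul := mul_le_mul_of_nonneg_left hconv hYpos.le
  calc (a * x1 + b * x2) ^ (n + 1) / Y ^ n
      = Y * ((a * x1 + b * x2) / Y) ^ (n + 1) := by
        rw [div_pow, pow_succ]
        field_simp
        ring
    _ ≤ Y * (a * y1 * Y⁻¹ * (x1 / y1) ^ (n + 1) + b * y2 * Y⁻¹ * (x2 / y2) ^ (n + 1)) := hmul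
    _ = a * (x1 ^ (n + 1) / y1 ^ n) + b * (x2 ^ (n + 1) / y2 ^ n) := by
        rw [div_pow, div_pow, pow_succ, pow_succ]
        field_simp
        ring

theorem stmt_1 (n : ℕ) (hn : 1 ≤ n) (c μ b : ℝ) (hc : 0 < c) (hμ : 0 ≤ μ) (hb : 0 ≤ b) :
    ConvexOn ℝ {p : ℝ × ℝ | 0 ≤ p.1 ∧ 0 ≤ p.2}
      (fun p : ℝ × ℝ => p.1 ^ (n + 1) / (c + μ * p.2) ^ n + b * p.1) := by
  constructor
  · intro p hp q hq a a' ha ha' hab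
    exact ⟨add_nonneg (mul_nonneg ha hp.1) (mul_nonneg ha' hq.1),
           add_nonneg (mul_nonneg ha hp.2) (mul_nonneg ha' hq.2)⟩
  · intro p hp q hq a a' ha ha' hab
    simp only [Prod.smul_fst, Prod.smul_snd, Prod.fst_add, Prod.snd_add, smul_eq_mul]
    have hy1 : 0 < c + μ * p.2 := by nlinarith [mul_nonneg hμ hp.2]
    have hy2 : 0 < c + μ * q.2 := by nlinarith [mul_nonneg hμ hq.2]
    have hden : c + μ * (a * p.2 + a' * q.2)
        = a * (c + μ * p.2) + a' * (c + μ * q.2) := by ring_nf; nlinarith [hab]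
    have key := radon_key n p.1 q.1 (c + μ * p.2) (c + μ * q.2) a a'
      hp.1 hq.1 hy1 hy2 ha ha' hab
    rw [hden]
    have hlin : b * (a * p.1 + a' * q.1) = a * (b * p.1) + a' * (b * q.1) := by ring
    calc (a * p.1 + a' * q.1) ^ (n + 1) / (a * (c + μ * p.2) + a' * (c + μ * q.2)) ^ n
          + b * (a * p.1 + a' * q.1)
        ≤ (a * (p.1 ^ (n + 1) / (c + μ * p.2) ^ n) + a' * (q.1 ^ (n + 1) / (c + μ * q.2) ^ n))
          + (a * (b * p.1) + a' * (b * q.1)) := by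
          rw [hlin]; exact add_le_add key le_rfl
      _ = a * (p.1 ^ (n + 1) / (c + μ * p.2) ^ n + b * p.1)
          + a' * (q.1 ^ (n + 1) / (c + μ * q.2) ^ n + b * q.1) := by ring
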